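/- Fix a > 0 and H ∈ (0,1). Then D(τ) · Γ(H+3/2) · a · τ^{−H−1/2} → 1 as τ → ∞; equivalently, D(τ) = (1/(Γ(H+3/2) a^{H+3/2})) ( (aτ)^{H+1/2} + o( (aτ)^{H+1/2} ) ) as τ → ∞. -/

import Mathlib

open MeasureTheory Real Set Filter Topology

/-- The moving-average kernel of the fractional Ornstein–Uhlenbeck process. -/
noncomputable def fouKernel (a H : ℝ) (t : ℝ) : ℝ :=
  (1 / Real.Gamma (H + 1/2)) *
    (t ^ (H - 1/2) - a * ∫ s in (0:ℝ)..t, (t - s) ^ (H - 1/2) * Real.exp (-a * s))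

/-- The skew function `D(τ) = ∫₀^τ (τ-u) K(u) du`. -/
noncomputable def fouD (a H : ℝ) (τ : ℝ) : ℝ :=
  ∫ u in (0:ℝ)..τ, (τ - u) * fouKernel a H u

noncomputable def fouP (a c t : ℝ) : ℝ := ∫ w in (0:ℝ)..t, w ^ c * Real.exp (a * w)

-- basic integrability
lemma fouInt (a : ℝ) {c : ℝ} (hc : -1 < c) (x y : ℝ) :
    IntervalIntegrable (fun w => w ^ c * Real.exp (a * w)) volume x y :=
  (intervalIntegral.intervalIntegrable_rpow' hc).mul_continuousOn
    (Real.continuous_exp.comp (continuous_const.mul continuous_id)).continuousOn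

lemma fouP_cont (a : ℝ) {c : ℝ} (hc : -1 < c) : Continuous (fouP a c) :=
  intervalIntegral.continuous_primitive (fun x y => fouInt a hc x y) 0

-- substitution lemma
lemma fouSub (a c t : ℝ) :
    (∫ s in (0:ℝ)..t, (t - s) ^ c * Real.exp (-a * s))
      = Real.exp (-(a * t)) * fouP a c t := by
  have h1 : (∫ s in (0:ℝ)..t, (t - s) ^ c * Real.exp (-a * s))
      = ∫ s in (0:ℝ)..t, (fun w => w ^ c * (Real.exp (a * w) * Real.exp (-(a * t)))) (t - s) := by
    refine intervalIntegral.integral_congr fun s _ => ?_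
    simp only [← Real.exp_add]
    ring_nf
  rw [h1, intervalIntegral.integral_comp_sub_left (fun w => w ^ c * (Real.exp (a * w) * Real.exp (-(a * t)))) t]
  simp only [sub_self, sub_zero, ← mul_assoc]
  rw [intervalIntegral.integral_mul_const, fouP, mul_comm]



-- J-type function : e^{-at} * P a c t
noncomputable def fouE (a c t : ℝ) : ℝ := Real.exp (-(a * t)) * fouP a c t

lemma fouE_hasDeriv (a : ℝ) {c t : ℝ} (hc : -1 < c) (ht : 0 < t) :
    HasDerivAt (fouE a c) (t ^ c - a * fouE a c t) t := by
  have hP : HasDerivAt (fouP a c) (t ^ c * Real.exp (a * t)) t := by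
    refine intervalIntegral.integral_hasDerivAt_right (fouInt a hc 0 t) ?_ ?_
    · refine ContinuousOn.stronglyMeasurableAtFilter isOpen_Ioi ?_ t ht
      exact (continuousOn_id.rpow_const fun x hx => Or.inl (ne_of_gt hx)).mul
        (Real.continuous_exp.comp (continuous_const.mul continuous_id)).continuousOn
    · exact ((Real.continuousAt_rpow_const t c (Or.inl ht.ne')).mul
        ((Real.continuous_exp.comp (continuous_const.mul continuous_id)).continuousAt))
  have hexp : HasDerivAt (fun u : ℝ => Real.exp (-(a * u))) (-a * Real.exp (-(a * t))) t := by
    have h1 : HasDerivAt (fun u : ℝ => -(a * u)) (-a) t := by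
      exact ((hasDerivAt_id t).const_mul a).neg.congr_deriv (by ring)
    exact ((Real.hasDerivAt_exp (-(a * t))).comp t h1).congr_deriv (by ring : _ = -a * Real.exp (-(a * t)))
  have : HasDerivAt (fun u => Real.exp (-(a * u)) * fouP a c u) _ t := hexp.mul hP
  refine this.congr_deriv ?_
  unfold fouE
  have h2 : Real.exp (-(a * t)) * (t ^ c * Real.exp (a * t)) = t ^ c := by
    rw [mul_comm (Real.exp (-(a*t))), mul_assoc, ← Real.exp_add]
    simp
  ring_nf
  ring_nf at h2
  nlinarith [h2]



-- IBP identity: (c+1) E_c + a E_{c+1} = t^(c+1)  for t ≥ 0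
lemma fouIBP (a : ℝ) {c t : ℝ} (hc : -1 < c) (ht : 0 ≤ t) :
    (c + 1) * fouE a c t + a * fouE a (c + 1) t = t ^ (c + 1) := by
  have hc1 : (0:ℝ) < c + 1 := by linarith
  have key : (c + 1) * fouP a c t + a * fouP a (c+1) t = t ^ (c+1) * Real.exp (a * t) := by
    have hFTC : (∫ w in (0:ℝ)..t,
        ((c+1) * (w ^ c * Real.exp (a * w)) + a * (w ^ (c+1) * Real.exp (a * w))))
        = t ^ (c+1) * Real.exp (a * t) - (0:ℝ) ^ (c+1) * Real.exp (a * 0) := by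
      refine intervalIntegral.integral_eq_sub_of_hasDeriv_right_of_le (f := fun w => w ^ (c+1) * Real.exp (a * w)) ht ?_ ?_ ?_
      · exact ((continuousOn_id.rpow_const fun x _ => Or.inr hc1.le).mul
          (Real.continuous_exp.comp (continuous_const.mul continuous_id)).continuousOn)
      · intro x hx
        have h1 : HasDerivAt (fun w : ℝ => w ^ (c+1)) ((c+1) * x ^ c) x := by
          have := Real.hasDerivAt_rpow_const (x := x) (p := c+1) (Or.inl (ne_of_gt hx.1))
          simpa [show c + 1 - 1 = c by ring] using this
        have h2 : HasDerivAt (fun w : ℝ => Real.exp (a * w)) (a * Real.exp (a * x)) x := by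
          exact ((Real.hasDerivAt_exp (a * x)).comp x
            ((hasDerivAt_id x).const_mul a)).congr_deriv (by ring)
        have : HasDerivWithinAt (fun w => w ^ (c+1) * Real.exp (a * w)) _ (Ioi x) x :=
          (h1.mul h2).hasDerivWithinAt (s := Ioi x)
        exact this.congr_deriv (by ring : _ = (c+1) * (x ^ c * Real.exp (a * x)) + a * (x ^ (c+1) * Real.exp (a * x)))
      · exact ((fouInt a hc 0 t).const_mul _).add ((fouInt a (by linarith) 0 t).const_mul _)
    rw [intervalIntegral.integral_add ((fouInt a hc 0 t).const_mul _)
        ((fouInt a (by linarith) 0 t).const_mul _),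
      intervalIntegral.integral_const_mul, intervalIntegral.integral_const_mul] at hFTC
    rw [Real.zero_rpow (ne_of_gt hc1)] at hFTC
    simpa [fouP] using hFTC
  unfold fouE
  have h3 : Real.exp (-(a * t)) * Real.exp (a * t) = 1 := by rw [← Real.exp_add]; simp
  calc (c+1) * (Real.exp (-(a*t)) * fouP a c t) + a * (Real.exp (-(a*t)) * fouP a (c+1) t)
      = Real.exp (-(a*t)) * ((c+1) * fouP a c t + a * fouP a (c+1) t) := by ring
    _ = Real.exp (-(a*t)) * (t ^ (c+1) * Real.exp (a * t)) := by rw [key]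
    _ = t ^ (c+1) * (Real.exp (-(a*t)) * Real.exp (a * t)) := by ring
    _ = t ^ (c+1) := by rw [h3, mul_one]

-- helper: f 0 = 0, continuous on [0,∞), zero derivative on (0,∞) ⇒ f t = 0 for t > 0
lemma zero_of_deriv_zero {f : ℝ → ℝ} {t : ℝ} (ht : 0 < t)
    (hcont : ContinuousOn f (Icc 0 t)) (hf0 : f 0 = 0)
    (hderiv : ∀ x ∈ Ioo (0:ℝ) t, HasDerivAt f 0 x) : f t = 0 := by
  have key : ∀ ε ∈ Ioo (0:ℝ) t, f t = f ε := by
    intro ε hε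
    have := constant_of_has_deriv_right_zero
      (f := f) (a := ε) (b := t)
      (hcont.mono (Icc_subset_Icc hε.1.le le_rfl))
      (fun x hx => (hderiv x ⟨lt_of_lt_of_le hε.1 hx.1, hx.2⟩).hasDerivWithinAt)
    exact this t ⟨hε.2.le, le_rfl⟩
  haveI : (𝓝[Ioo (0:ℝ) t] 0).NeBot := by
    refine mem_closure_iff_nhdsWithin_neBot.mp ?_
    rw [closure_Ioo ht.ne]
    exact ⟨le_rfl, ht.le⟩
  have h1 : Tendsto f (𝓝[Ioo (0:ℝ) t] 0) (𝓝 0) := by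
    have h1' : Tendsto f (𝓝[Ioo (0:ℝ) t] 0) (𝓝 (f 0)) :=
      ((hcont 0 ⟨le_rfl, ht.le⟩).tendsto).mono_left (nhdsWithin_mono 0 Ioo_subset_Icc_self)
    rwa [hf0] at h1'
  have h2 : Tendsto f (𝓝[Ioo (0:ℝ) t] 0) (𝓝 (f t)) := by
    refine Tendsto.congr' ?_ tendsto_const_nhds
    exact eventually_mem_nhdsWithin.mono fun ε hε => (key ε hε)
  exact tendsto_nhds_unique h2 h1


lemma hnu {H : ℝ} (hH : H ∈ Set.Ioo (0:ℝ) 1) : -1 < H - 1/2 := by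
  obtain ⟨h1, _⟩ := hH; linarith

lemma fouE_cont (a : ℝ) {c : ℝ} (hc : -1 < c) : Continuous (fouE a c) :=
  (Real.continuous_exp.comp (continuous_const.mul continuous_id).neg).mul
    (intervalIntegral.continuous_primitive (fun x y => fouInt a hc x y) 0)

lemma kernel_eq (a : ℝ) (H : ℝ) (t : ℝ) :
    fouKernel a H t = (1 / Real.Gamma (H + 1/2)) * (t ^ (H - 1/2) - a * fouE a (H - 1/2) t) := by
  rw [fouKernel, fouSub a (H - 1/2) t]; rfl

lemma kernel_contOn (a : ℝ) {H : ℝ} (hH : H ∈ Set.Ioo (0:ℝ) 1) :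
    ContinuousOn (fouKernel a H) (Ioi 0) := by
  have : ContinuousOn (fun t => (1 / Real.Gamma (H + 1/2)) *
      (t ^ (H - 1/2) - a * fouE a (H - 1/2) t)) (Ioi 0) :=
    continuousOn_const.mul ((continuousOn_id.rpow_const fun x hx => Or.inl (ne_of_gt hx)).sub
      (continuous_const.mul (fouE_cont a (hnu hH))).continuousOn)
  exact this.congr fun t _ => kernel_eq a H t

lemma kernel_int (a : ℝ) {H : ℝ} (hH : H ∈ Set.Ioo (0:ℝ) 1) (x y : ℝ) :
    IntervalIntegrable (fouKernel a H) volume x y := by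
  have : IntervalIntegrable (fun t => (1 / Real.Gamma (H + 1/2)) *
      (t ^ (H - 1/2) - a * fouE a (H - 1/2) t)) volume x y :=
    (((intervalIntegral.intervalIntegrable_rpow' (hnu hH)).sub
      ((continuous_const.mul (fouE_cont a (hnu hH))).intervalIntegrable x y)).const_mul _)
  exact this.congr (fun t _ => (kernel_eq a H t).symm)

noncomputable def fouG (a H t : ℝ) : ℝ := ∫ u in (0:ℝ)..t, fouKernel a H u
noncomputable def fouW (a H t : ℝ) : ℝ := ∫ u in (0:ℝ)..t, fouKernel a H u * u

lemma fouG_cont (a : ℝ) {H : ℝ} (hH : H ∈ Set.Ioo (0:ℝ) 1) : Continuous (fouG a H) :=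
  intervalIntegral.continuous_primitive (fun x y => kernel_int a hH x y) 0

lemma fouW_cont (a : ℝ) {H : ℝ} (hH : H ∈ Set.Ioo (0:ℝ) 1) : Continuous (fouW a H) :=
  intervalIntegral.continuous_primitive
    (fun x y => (kernel_int a hH x y).mul_continuousOn continuous_id.continuousOn) 0

lemma fouG_hasDeriv (a : ℝ) {H : ℝ} (hH : H ∈ Set.Ioo (0:ℝ) 1) {t : ℝ} (ht : 0 < t) :
    HasDerivAt (fouG a H) (fouKernel a H t) t :=
  intervalIntegral.integral_hasDerivAt_right (kernel_int a hH 0 t)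
    (ContinuousOn.stronglyMeasurableAtFilter isOpen_Ioi (kernel_contOn a hH) t ht)
    ((kernel_contOn a hH).continuousAt (Ioi_mem_nhds ht))

lemma fouW_hasDeriv (a : ℝ) {H : ℝ} (hH : H ∈ Set.Ioo (0:ℝ) 1) {t : ℝ} (ht : 0 < t) :
    HasDerivAt (fouW a H) (fouKernel a H t * t) t := by
  have hker : IntervalIntegrable (fun u => fouKernel a H u * u) volume 0 t :=
    (kernel_int a hH 0 t).mul_continuousOn continuous_id.continuousOn
  exact intervalIntegral.integral_hasDerivAt_right hker
    (ContinuousOn.stronglyMeasurableAtFilter isOpen_Ioi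
      ((kernel_contOn a hH).mul continuous_id.continuousOn) t ht)
    (((kernel_contOn a hH).continuousAt (Ioi_mem_nhds ht)).mul continuousAt_id)

lemma G_eq_E (a : ℝ) {H : ℝ} (hH : H ∈ Set.Ioo (0:ℝ) 1) {t : ℝ} (ht : 0 < t) :
    Real.Gamma (H + 1/2) * fouG a H t = fouE a (H - 1/2) t := by
  have hG1 : 0 < Real.Gamma (H + 1/2) := Real.Gamma_pos_of_pos (by linarith [hH.1])
  have key := zero_of_deriv_zero
    (f := fun t => Real.Gamma (H + 1/2) * fouG a H t - fouE a (H - 1/2) t) ht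
    ((continuous_const.mul (fouG_cont a hH)).sub (fouE_cont a (hnu hH))).continuousOn
    (by simp [fouG, fouE, fouP])
    (fun x hx => by
      have h1 : HasDerivAt (fun t => Real.Gamma (H + 1/2) * fouG a H t - fouE a (H - 1/2) t)
          (Real.Gamma (H + 1/2) * fouKernel a H x - (x ^ (H - 1/2) - a * fouE a (H - 1/2) x)) x :=
        ((fouG_hasDeriv a hH hx.1).const_mul (Real.Gamma (H + 1/2))).sub
          (fouE_hasDeriv a (hnu hH) hx.1)
      have h2 : Real.Gamma (H + 1/2) * fouKernel a H x -
          (x ^ (H - 1/2) - a * fouE a (H - 1/2) x) = 0 := by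
        rw [kernel_eq a H x, ← mul_assoc, mul_one_div, div_self (ne_of_gt hG1), one_mul, sub_self]
      rwa [h2] at h1)
  linarith [key]

lemma D_eq (a : ℝ) {H : ℝ} (hH : H ∈ Set.Ioo (0:ℝ) 1) (τ : ℝ) :
    fouD a H τ = τ * fouG a H τ - fouW a H τ := by
  have h1 : IntervalIntegrable (fun u => τ * fouKernel a H u) volume 0 τ :=
    (kernel_int a hH 0 τ).const_mul τ
  have h2 : IntervalIntegrable (fun u => fouKernel a H u * u) volume 0 τ :=
    (kernel_int a hH 0 τ).mul_continuousOn continuous_id.continuousOn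
  calc fouD a H τ = ∫ u in (0:ℝ)..τ, (τ * fouKernel a H u - fouKernel a H u * u) :=
        intervalIntegral.integral_congr fun u _ => by ring
    _ = (∫ u in (0:ℝ)..τ, τ * fouKernel a H u) - ∫ u in (0:ℝ)..τ, fouKernel a H u * u :=
        intervalIntegral.integral_sub h1 h2
    _ = τ * fouG a H τ - fouW a H τ := by
        rw [intervalIntegral.integral_const_mul]; rfl

lemma fouD_hasDeriv (a : ℝ) {H : ℝ} (hH : H ∈ Set.Ioo (0:ℝ) 1) {t : ℝ} (ht : 0 < t) :
    HasDerivAt (fouD a H) (fouG a H t) t := by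
  have heq : fouD a H = fun t => t * fouG a H t - fouW a H t := funext (D_eq a hH)
  rw [heq]
  have h1 : HasDerivAt (fun t => t * fouG a H t - fouW a H t)
      (1 * fouG a H t + t * fouKernel a H t - fouKernel a H t * t) t :=
    ((hasDerivAt_id t).mul (fouG_hasDeriv a hH ht)).sub (fouW_hasDeriv a hH ht)
  convert h1 using 1
  ring

lemma D_eq_E (a : ℝ) {H : ℝ} (hH : H ∈ Set.Ioo (0:ℝ) 1) {t : ℝ} (ht : 0 < t) :
    Real.Gamma (H + 3/2) * fouD a H t = fouE a (H + 1/2) t := by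
  have hH1 : (0:ℝ) < H + 1/2 := by linarith [hH.1]
  have hG3 : Real.Gamma (H + 3/2) = (H + 1/2) * Real.Gamma (H + 1/2) := by
    rw [show H + 3/2 = (H + 1/2) + 1 by ring, Real.Gamma_add_one (ne_of_gt hH1)]
  have hDcont : Continuous (fouD a H) := by
    have heq : fouD a H = fun t => t * fouG a H t - fouW a H t := funext (D_eq a hH)
    rw [heq]
    exact (continuous_id.mul (fouG_cont a hH)).sub (fouW_cont a hH)
  have key := zero_of_deriv_zero
    (f := fun t => Real.Gamma (H + 3/2) * fouD a H t - fouE a (H + 1/2) t) ht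
    ((continuous_const.mul hDcont).sub (fouE_cont a (by linarith : (-1:ℝ) < H + 1/2))).continuousOn
    (by simp [fouD, fouE, fouP])
    (fun x hx => by
      have h1 : HasDerivAt (fun t => Real.Gamma (H + 3/2) * fouD a H t - fouE a (H + 1/2) t)
          (Real.Gamma (H + 3/2) * fouG a H x - (x ^ (H + 1/2) - a * fouE a (H + 1/2) x)) x :=
        ((fouD_hasDeriv a hH hx.1).const_mul (Real.Gamma (H + 3/2))).sub
          (fouE_hasDeriv a (c := H + 1/2) (by linarith) hx.1)
      have h2 : Real.Gamma (H + 3/2) * fouG a H x -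
          (x ^ (H + 1/2) - a * fouE a (H + 1/2) x) = 0 := by
        have hibp := fouIBP a (hnu hH) hx.1.le
        have hge := G_eq_E a hH hx.1
        rw [show (H - 1/2) + 1 = H + 1/2 by ring] at hibp
        rw [hG3, mul_assoc, hge]
        linarith
      rwa [h2] at h1)
  linarith [key]


noncomputable def fouF (a H τ : ℝ) : ℝ → ℝ :=
  (Ioc (0:ℝ) τ).indicator (fun s => ((τ - s) / τ) ^ (H + 1/2) * (a * Real.exp (-a * s)))

noncomputable def fouBound (a : ℝ) : ℝ → ℝ :=
  (Ioi (0:ℝ)).indicator (fun s => a * Real.exp (-a * s))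

theorem fouD_asymptotics_infinity (a H : ℝ) (ha : 0 < a) (hH : H ∈ Set.Ioo (0:ℝ) 1) :
    Tendsto (fun τ : ℝ => fouD a H τ * Real.Gamma (H + 3/2) * a * τ ^ (-H - 1/2))
      atTop (𝓝 1) := by
  have hp : (0:ℝ) < H + 1/2 := by linarith [hH.1]
  -- the expression equals ∫ F τ for τ > 0
  have key : ∀ τ : ℝ, 0 < τ →
      fouD a H τ * Real.Gamma (H + 3/2) * a * τ ^ (-H - 1/2) = ∫ s, fouF a H τ s := by
    intro τ hτ
    have hE : fouE a (H + 1/2) τ = ∫ s in (0:ℝ)..τ, (τ - s) ^ (H + 1/2) * Real.exp (-a * s) :=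
      (fouSub a (H + 1/2) τ).symm
    have h1 : fouD a H τ * Real.Gamma (H + 3/2) * a * τ ^ (-H - 1/2)
        = a * τ ^ (-(H + 1/2)) * ∫ s in (0:ℝ)..τ, (τ - s) ^ (H + 1/2) * Real.exp (-a * s) := by
      rw [← hE, ← D_eq_E a hH hτ, show -H - 1/2 = -(H + 1/2) by ring]
      ring
    rw [h1, ← intervalIntegral.integral_const_mul,
      intervalIntegral.integral_of_le hτ.le, ← integral_indicator measurableSet_Ioc]
    congr 1
    funext s
    unfold fouF
    by_cases hs : s ∈ Ioc (0:ℝ) τ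
    · rw [indicator_of_mem hs, indicator_of_mem hs]
      have h2 : ((τ - s) / τ) ^ (H + 1/2) = (τ - s) ^ (H + 1/2) / τ ^ (H + 1/2) :=
        Real.div_rpow (by linarith [hs.2]) hτ.le _
      rw [h2, Real.rpow_neg hτ.le]
      have hτp : (0:ℝ) < τ ^ (H + 1/2) := Real.rpow_pos_of_pos hτ _
      field_simp
    · rw [indicator_of_notMem hs, indicator_of_notMem hs]
  -- dominated convergence
  have hmeas : ∀ᶠ τ in (atTop : Filter ℝ), AEStronglyMeasurable (fouF a H τ) volume := by
    filter_upwards with τ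
    refine (Measurable.indicator ?_ measurableSet_Ioc).aestronglyMeasurable
    exact (((Real.continuous_rpow_const hp.le).comp
      ((continuous_const.sub continuous_id).div_const τ)).mul
      (continuous_const.mul (Real.continuous_exp.comp
        (continuous_const.mul continuous_id)))).measurable
  have h_bound : ∀ᶠ τ in (atTop : Filter ℝ), ∀ᵐ s : ℝ, ‖fouF a H τ s‖ ≤ fouBound a s := by
    filter_upwards [eventually_gt_atTop (0:ℝ)] with τ hτ
    filter_upwards with s
    unfold fouF fouBound
    by_cases hs : s ∈ Ioc (0:ℝ) τ
    · rw [indicator_of_mem hs, indicator_of_mem (mem_Ioi.mpr hs.1)]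
      have hb1 : (0:ℝ) ≤ (τ - s) / τ := div_nonneg (by linarith [hs.2]) hτ.le
      have hb2 : (τ - s) / τ ≤ 1 := by
        rw [div_le_one hτ]; linarith [hs.1]
      have hr : ((τ - s) / τ) ^ (H + 1/2) ≤ 1 := Real.rpow_le_one hb1 hb2 hp.le
      have hrn : (0:ℝ) ≤ ((τ - s) / τ) ^ (H + 1/2) := Real.rpow_nonneg hb1 _
      have hpos : (0:ℝ) < a * Real.exp (-a * s) := by positivity
      rw [Real.norm_eq_abs, abs_of_nonneg (by positivity)]
      nlinarith
    · rw [indicator_of_notMem hs, norm_zero]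
      by_cases hs' : s ∈ Ioi (0:ℝ)
      · rw [indicator_of_mem hs']; positivity
      · rw [indicator_of_notMem hs']
  have hbound_int : Integrable (fouBound a) := by
    unfold fouBound
    rw [integrable_indicator_iff measurableSet_Ioi]
    exact (exp_neg_integrableOn_Ioi 0 ha).const_mul a
  have h_lim : ∀ᵐ s : ℝ, Tendsto (fun τ => fouF a H τ s) atTop (𝓝 (fouBound a s)) := by
    filter_upwards with s
    by_cases hs : 0 < s
    · have hev : ∀ᶠ τ in (atTop : Filter ℝ),
          ((τ - s) / τ) ^ (H + 1/2) * (a * Real.exp (-a * s)) = fouF a H τ s := by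
        filter_upwards [eventually_ge_atTop s] with τ hτ
        unfold fouF
        rw [indicator_of_mem (mem_Ioc.mpr ⟨hs, hτ⟩)]
      have l1 : Tendsto (fun τ : ℝ => (τ - s)/τ) atTop (𝓝 1) := by
        have l1' : Tendsto (fun τ : ℝ => 1 - s/τ) atTop (𝓝 (1 - 0)) :=
          tendsto_const_nhds.sub (tendsto_const_nhds.div_atTop tendsto_id)
        rw [sub_zero] at l1'
        refine Tendsto.congr' ?_ l1'
        filter_upwards [eventually_gt_atTop (0:ℝ)] with τ hτ
        field_simp
      have l2 : Tendsto (fun τ : ℝ => ((τ - s)/τ) ^ (H + 1/2)) atTop (𝓝 1) := by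
        have := ((Real.continuousAt_rpow_const 1 (H + 1/2) (Or.inl one_ne_zero)).tendsto).comp l1
        simpa [Real.one_rpow, Function.comp_def] using this
      have l3 : Tendsto (fun τ : ℝ => ((τ - s)/τ) ^ (H + 1/2) * (a * Real.exp (-a * s)))
          atTop (𝓝 (a * Real.exp (-a * s))) := by
        simpa using l2.mul_const (a * Real.exp (-a * s))
      have : fouBound a s = a * Real.exp (-a * s) := by
        unfold fouBound; rw [indicator_of_mem (mem_Ioi.mpr hs)]
      rw [this]
      exact Tendsto.congr' hev l3
    · have hev : ∀ τ : ℝ, fouF a H τ s = 0 := fun τ =>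
        indicator_of_notMem (fun hmem => hs hmem.1) _
      have hb0 : fouBound a s = 0 :=
        indicator_of_notMem (fun hmem => hs hmem) _
      rw [hb0]
      simp only [hev]
      exact tendsto_const_nhds
  have hDCT := tendsto_integral_filter_of_dominated_convergence (fouBound a)
    hmeas h_bound hbound_int h_lim
  have hint : ∫ s, fouBound a s = 1 := by
    unfold fouBound
    rw [integral_indicator measurableSet_Ioi]
    have h0 := integral_comp_mul_left_Ioi (fun x => Real.exp (-x)) 0 ha
    simp only [mul_zero, smul_eq_mul, integral_exp_neg_Ioi_zero, mul_one] at h0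
    have h2 : ∀ s : ℝ, -a * s = -(a * s) := fun s => by ring
    rw [MeasureTheory.integral_const_mul]
    simp_rw [h2]
    rw [h0]
    field_simp
  have hfinal : Tendsto (fun τ : ℝ => fouD a H τ * Real.Gamma (H + 3/2) * a * τ ^ (-H - 1/2))
      atTop (𝓝 (∫ s, fouBound a s)) := by
    refine Tendsto.congr' ?_ hDCT
    filter_upwards [eventually_gt_atTop (0:ℝ)] with τ hτ
    exact (key τ hτ).symm
  rwa [hint] at hfinal
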